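/- Let ℓ ∈ ℤ and let (φ_m)_{m≥−1} be the unique real coefficients such that cos((ℓ+1)s/2)/(s·sin(s/2)) = Σ_{m≥−1} φ_m s^{2m} for all 0 < |s| < 2π. Then for every t ∈ (0, 2π), the function r ↦ [ r·cos((ℓ+1)tr/2)/sin(tr/2) − cos((ℓ+1)t/2)/sin(t/2) ] / (t(1−r²)) (extended continuously to r = ±1 and r = 0) is integrable on [−1, 1], the series Σ_{m≥0} φ_m (2·H_{2m+1} − H_m) t^{2m} converges absolutely, and ∫_{−1}^1 [ r·cos((ℓ+1)tr/2)/sin(tr/2) − cos((ℓ+1)t/2)/sin(t/2) ] / (t(1−r²)) dr = −Σ_{m≥0} φ_m (2·H_{2m+1} − H_m) t^{2m}. -/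

import Mathlib

open MeasureTheory Real

/-- The `m`-th harmonic number `H_m = Σ_{j=1}^m 1/j`, with `H_0 = 0`. -/
noncomputable def harmonicNum (m : ℕ) : ℝ := ∑ j ∈ Finset.range m, 1 / ((j : ℝ) + 1)

lemma harmonicNum_succ (m : ℕ) :
    harmonicNum (m + 1) = harmonicNum m + 1 / ((m : ℝ) + 1) := by
  simp [harmonicNum, Finset.sum_range_succ]

lemma harmonicNum_nonneg (m : ℕ) : 0 ≤ harmonicNum m := by
  apply Finset.sum_nonneg; intro j _; positivity

lemma harmonicNum_mono {a b : ℕ} (h : a ≤ b) : harmonicNum a ≤ harmonicNum b := by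
  apply Finset.sum_le_sum_of_subset_of_nonneg (Finset.range_subset_range.2 h)
  intro j _ _; positivity

lemma harmonicNum_le (m : ℕ) : harmonicNum m ≤ m := by
  calc harmonicNum m ≤ ∑ j ∈ Finset.range m, 1 := by
        apply Finset.sum_le_sum; intro j _
        rw [div_le_one (by positivity)]; linarith [Nat.cast_nonneg (α := ℝ) j]
  _ = m := by simp

lemma harmonic_odd_sum (m : ℕ) :
    ∑ j ∈ Finset.range (m + 1), (1 : ℝ) / (2 * (j : ℝ) + 1)
      = harmonicNum (2 * m + 1) - harmonicNum m / 2 := by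
  induction m with
  | zero => norm_num [harmonicNum]
  | succ n ih =>
    have h4 : 2 * (n + 1) + 1 = (2 * n + 1) + 1 + 1 := by ring
    have e1 := harmonicNum_succ ((2 * n + 1) + 1)
    have e2 := harmonicNum_succ (2 * n + 1)
    have e3 := harmonicNum_succ n
    rw [Finset.sum_range_succ, ih, h4, e1, e2, e3]
    have c1 : (2 * (n : ℝ) + 3) ≠ 0 := by positivity
    have c2 : (2 * (n : ℝ) + 2) ≠ 0 := by positivity
    have c3 : ((n : ℝ) + 1) ≠ 0 := by positivity
    push_cast
    field_simp
    ring

lemma integral_even_pow (j : ℕ) :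
    ∫ r in Set.Ioo (-1 : ℝ) 1, r ^ (2 * j) = 2 / (2 * (j : ℝ) + 1) := by
  rw [← MeasureTheory.integral_Ioc_eq_integral_Ioo,
    ← intervalIntegral.integral_of_le (by norm_num : (-1 : ℝ) ≤ 1),
    integral_pow]
  rw [show (-1 : ℝ) ^ (2 * j + 1) = -1 from Odd.neg_one_pow ⟨j, by ring⟩, one_pow]
  push_cast
  ring

lemma sin_half_ne_zero {x : ℝ} (hx : x ≠ 0) (hlt : |x| < 2 * π) : Real.sin (x / 2) ≠ 0 := by
  rw [abs_lt] at hlt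
  intro h
  have := (Real.sin_eq_zero_iff_of_lt_of_lt (by linarith : -π < x / 2)
    (by linarith : x / 2 < π)).mp h
  exact hx (by linarith)

/-- Proposition 9.2 (the star-operation identity): here `ψ k = φ_{k-1}`, i.e. the Laurent
coefficients `(φ_m)_{m ≥ -1}` of `cos((ℓ+1)s/2)/(s sin(s/2))` are indexed by `k = m + 1 : ℕ`. -/
theorem stmt_10 (ℓ : ℤ) (ψ : ℕ → ℝ)
    (hψ : ∀ s : ℝ, s ≠ 0 → |s| < 2 * π →
      HasSum (fun k : ℕ => ψ k * s ^ (2 * (k : ℤ) - 2))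
        (Real.cos (((ℓ : ℝ) + 1) * s / 2) / (s * Real.sin (s / 2))))
    (t : ℝ) (ht : t ∈ Set.Ioo 0 (2 * π)) :
    IntegrableOn
      (fun r : ℝ =>
        (r * Real.cos (((ℓ : ℝ) + 1) * t * r / 2) / Real.sin (t * r / 2)
            - Real.cos (((ℓ : ℝ) + 1) * t / 2) / Real.sin (t / 2)) / (t * (1 - r ^ 2)))
      (Set.Ioo (-1) 1) ∧
    Summable (fun m : ℕ =>
      |ψ (m + 1) * (2 * harmonicNum (2 * m + 1) - harmonicNum m) * t ^ (2 * m)|) ∧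
    ∫ r in Set.Ioo (-1 : ℝ) 1,
        (r * Real.cos (((ℓ : ℝ) + 1) * t * r / 2) / Real.sin (t * r / 2)
            - Real.cos (((ℓ : ℝ) + 1) * t / 2) / Real.sin (t / 2)) / (t * (1 - r ^ 2))
      = -∑' m : ℕ, ψ (m + 1) * (2 * harmonicNum (2 * m + 1) - harmonicNum m) * t ^ (2 * m) := by
  obtain ⟨ht0, ht2π⟩ := ht
  have hπ : 0 < π := Real.pi_pos
  have htne : t ≠ 0 := ne_of_gt ht0
  have htabs : |t| < 2 * π := by rw [abs_of_pos ht0]; exact ht2π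
  set g : ℕ → ℝ → ℝ := fun m r =>
    ψ (m + 1) * t ^ (2 * m) * ∑ j ∈ Finset.range (m + 1), r ^ (2 * j) with hgdef
  -- bound on coefficients
  obtain ⟨ρ, hρt, hρ0, hρ2π⟩ : ∃ ρ : ℝ, t < ρ ∧ 0 < ρ ∧ |ρ| < 2 * π := by
    refine ⟨(t + 2 * π) / 2, by linarith, by linarith, ?_⟩
    rw [abs_of_pos (by linarith)]; linarith
  obtain ⟨C, hC⟩ : ∃ C, ∀ k, |ψ k * ρ ^ (2 * (k : ℤ) - 2)| ≤ C := by
    have h := ((hψ ρ (ne_of_gt hρ0) hρ2π).summable.tendsto_atTop_zero.abs).bddAbove_range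
    obtain ⟨C, hC⟩ := h
    exact ⟨C, fun k => hC (Set.mem_range_self k)⟩
  have hC0 : 0 ≤ C := le_trans (abs_nonneg _) (hC 0)
  obtain ⟨q, hq0, hq1, hqpow⟩ : ∃ q : ℝ, 0 ≤ q ∧ q < 1 ∧
      ∀ m : ℕ, q ^ m * ρ ^ (2 * m) = t ^ (2 * m) := by
    refine ⟨(t / ρ) ^ 2, sq_nonneg _, ?_, ?_⟩
    · rw [sq_lt_one_iff_abs_lt_one, abs_div, abs_of_pos ht0, abs_of_pos hρ0,
        div_lt_one hρ0]
      exact hρt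
    · intro m
      rw [← pow_mul, div_pow, div_mul_cancel₀ _ (pow_ne_zero _ (ne_of_gt hρ0))]
  have hψb : ∀ m : ℕ, |ψ (m + 1)| * t ^ (2 * m) ≤ C * q ^ m := by
    intro m
    have h1 := hC (m + 1)
    rw [abs_mul, show (2 * ((m : ℕ) + 1 : ℕ) - 2 : ℤ) = ((2 * m : ℕ) : ℤ) by push_cast; ring,
      zpow_natCast, abs_of_nonneg (pow_nonneg hρ0.le _)] at h1
    have e1 : t ^ (2 * m) = ρ ^ (2 * m) * q ^ m := by rw [← hqpow m]; ring
    rw [e1, ← mul_assoc]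
    exact mul_le_mul_of_nonneg_right h1 (pow_nonneg hq0 m)
  -- harmonic bounds
  have hH0 : ∀ m : ℕ, 0 ≤ 2 * harmonicNum (2 * m + 1) - harmonicNum m := by
    intro m
    have := harmonicNum_mono (show m ≤ 2 * m + 1 by omega)
    have := harmonicNum_nonneg m
    linarith
  have hH1 : ∀ m : ℕ, 2 * harmonicNum (2 * m + 1) - harmonicNum m ≤ 6 * (m + 1) := by
    intro m
    have h1 := harmonicNum_le (2 * m + 1)
    have h2 := harmonicNum_nonneg m
    push_cast at h1 ⊢
    linarith
  set u : ℕ → ℝ := fun m => 6 * C * (((m : ℝ) + 1) * q ^ m) with hudef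
  have hsum_u : Summable u := by
    have h1 := summable_pow_mul_geometric_of_norm_lt_one (R := ℝ) 1
      (by rwa [Real.norm_eq_abs, abs_of_nonneg hq0] : ‖q‖ < 1)
    have h2 := summable_geometric_of_lt_one hq0 hq1
    have h3 : Summable (fun m : ℕ => ((m : ℝ) + 1) * q ^ m) := by
      have := (h1.add h2)
      simpa [pow_one, add_mul] using this
    exact h3.mul_left _
  have hbound : ∀ m : ℕ,
      |ψ (m + 1)| * t ^ (2 * m) * (2 * harmonicNum (2 * m + 1) - harmonicNum m) ≤ u m := by
    intro m
    have h1 := hψb m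
    have h2 := hH1 m
    have h3 := hH0 m
    have h4 : (0:ℝ) ≤ |ψ (m + 1)| * t ^ (2 * m) := by positivity
    calc |ψ (m + 1)| * t ^ (2 * m) * (2 * harmonicNum (2 * m + 1) - harmonicNum m)
        ≤ (C * q ^ m) * (6 * (m + 1)) := mul_le_mul h1 h2 h3 (le_trans h4 h1)
      _ = u m := by rw [hudef]; ring
  -- Summability (second conjunct)
  have habs : ∀ m : ℕ,
      |ψ (m + 1) * (2 * harmonicNum (2 * m + 1) - harmonicNum m) * t ^ (2 * m)|
        = |ψ (m + 1)| * t ^ (2 * m) * (2 * harmonicNum (2 * m + 1) - harmonicNum m) := by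
    intro m
    rw [abs_mul, abs_mul, abs_of_nonneg (hH0 m), abs_of_nonneg (pow_nonneg ht0.le _)]
    ring
  have hsummable : Summable (fun m : ℕ =>
      |ψ (m + 1) * (2 * harmonicNum (2 * m + 1) - harmonicNum m) * t ^ (2 * m)|) := by
    apply Summable.of_nonneg_of_le (fun m => abs_nonneg _) (fun m => ?_) hsum_u
    rw [habs m]; exact hbound m
  -- pointwise hasSum
  have key : ∀ r : ℝ, r ∈ Set.Ioo (-1 : ℝ) 1 → r ≠ 0 →
      HasSum (fun m : ℕ => -(g m r))
        ((r * Real.cos (((ℓ : ℝ) + 1) * t * r / 2) / Real.sin (t * r / 2)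
            - Real.cos (((ℓ : ℝ) + 1) * t / 2) / Real.sin (t / 2)) / (t * (1 - r ^ 2))) := by
    intro r hr hr0
    have hrabs : |r| < 1 := abs_lt.2 ⟨hr.1, hr.2⟩
    have hr2lt : r ^ 2 < 1 := by nlinarith [sq_abs r, abs_nonneg r]
    have hr2ne : (1 : ℝ) - r ^ 2 ≠ 0 := by nlinarith
    have hr2ne' : r ^ 2 ≠ 1 := by intro h; rw [h] at hr2ne; simp at hr2ne
    have htr0 : t * r ≠ 0 := mul_ne_zero htne hr0
    have htrabs : |t * r| < 2 * π := by
      rw [abs_mul, abs_of_pos ht0]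
      nlinarith [abs_nonneg r]
    have hsin1 : Real.sin (t * r / 2) ≠ 0 := sin_half_ne_zero htr0 htrabs
    have hsin2 : Real.sin (t / 2) ≠ 0 := sin_half_ne_zero htne htabs
    have hs1 := (hψ (t * r) htr0 htrabs).mul_right (t * r ^ 2)
    have hs2 := (hψ t htne htabs).mul_right t
    have hs3 := (hs1.sub hs2).div_const (t * (1 - r ^ 2))
    have hval : (Real.cos (((ℓ : ℝ) + 1) * (t * r) / 2) / ((t * r) * Real.sin ((t * r) / 2))
          * (t * r ^ 2)
        - Real.cos (((ℓ : ℝ) + 1) * t / 2) / (t * Real.sin (t / 2)) * t) / (t * (1 - r ^ 2))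
        = (r * Real.cos (((ℓ : ℝ) + 1) * t * r / 2) / Real.sin (t * r / 2)
            - Real.cos (((ℓ : ℝ) + 1) * t / 2) / Real.sin (t / 2)) / (t * (1 - r ^ 2)) := by
      rw [show ((ℓ : ℝ) + 1) * (t * r) = ((ℓ : ℝ) + 1) * t * r by ring]
      congr 1
      field_simp
    rw [hval] at hs3
    have hsub : r ^ 2 - 1 ≠ 0 := fun h => hr2ne (by linarith [sub_eq_zero.mp h])
    have hterm : ∀ k : ℕ,
        (ψ k * (t * r) ^ (2 * (k : ℤ) - 2) * (t * r ^ 2) - ψ k * t ^ (2 * (k : ℤ) - 2) * t)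
            / (t * (1 - r ^ 2))
          = if k = 0 then 0 else -(g (k - 1) r) := by
      intro k
      cases k with
      | zero =>
        rw [if_pos rfl]
        rw [show (2 * ((0 : ℕ) : ℤ) - 2) = -2 by norm_num]
        have e2 : ((t * r) ^ (-2 : ℤ) : ℝ) * (t * r ^ 2) = (t ^ (-2 : ℤ) : ℝ) * t := by
          rw [zpow_neg, zpow_neg, zpow_two, zpow_two]
          field_simp
        rw [div_eq_zero_iff]
        left
        rw [mul_assoc, mul_assoc, e2, sub_self]
      | succ m =>
        rw [if_neg (Nat.succ_ne_zero m), Nat.succ_sub_one]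
        rw [show (2 * (((m + 1) : ℕ) : ℤ) - 2) = ((2 * m : ℕ) : ℤ) by push_cast; ring,
          zpow_natCast, zpow_natCast]
        have hS : (∑ j ∈ Finset.range (m + 1), r ^ (2 * j)) * (r ^ 2 - 1)
            = (r ^ 2) ^ (m + 1) - 1 := by
          have : ∑ j ∈ Finset.range (m + 1), r ^ (2 * j)
              = ∑ j ∈ Finset.range (m + 1), (r ^ 2) ^ j :=
            Finset.sum_congr rfl fun j _ => by rw [← pow_mul]
          rw [this, geom_sum_eq hr2ne', div_mul_cancel₀ _ hsub]
        show _ = -(ψ (m + 1) * t ^ (2 * m) * ∑ j ∈ Finset.range (m + 1), r ^ (2 * j))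
        rw [div_eq_iff (mul_ne_zero htne hr2ne)]
        linear_combination (-(ψ (m + 1) * t ^ (2 * m) * t)) * hS
    rw [show (fun k : ℕ => (ψ k * (t * r) ^ (2 * (k : ℤ) - 2) * (t * r ^ 2)
          - ψ k * t ^ (2 * (k : ℤ) - 2) * t) / (t * (1 - r ^ 2)))
        = fun k : ℕ => if k = 0 then (0 : ℝ) else -(g (k - 1) r) from funext hterm] at hs3
    have hs4 := (hasSum_nat_add_iff'
      (f := fun k : ℕ => if k = 0 then (0 : ℝ) else -(g (k - 1) r)) 1).2 hs3
    simpa using hs4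
  -- integrability of each g m
  have hcont_g : ∀ m : ℕ, Continuous (g m) := by
    intro m
    exact continuous_const.mul (continuous_finset_sum _ (fun j _ => continuous_pow (2 * j)))
  have hint_g : ∀ m : ℕ, IntegrableOn (g m) (Set.Ioo (-1 : ℝ) 1) := fun m =>
    ((hcont_g m).integrableOn_Icc (a := -1) (b := 1)).mono_set Set.Ioo_subset_Icc_self
  -- sum of odd reciprocals
  have hsum2 : ∀ m : ℕ, ∑ j ∈ Finset.range (m + 1), (2 : ℝ) / (2 * (j : ℝ) + 1)
      = 2 * harmonicNum (2 * m + 1) - harmonicNum m := by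
    intro m
    have h1 := harmonic_odd_sum m
    have h2 : ∑ j ∈ Finset.range (m + 1), (2 : ℝ) / (2 * (j : ℝ) + 1)
        = 2 * ∑ j ∈ Finset.range (m + 1), (1 : ℝ) / (2 * (j : ℝ) + 1) := by
      rw [Finset.mul_sum]
      exact Finset.sum_congr rfl fun j _ => by rw [mul_one_div]
    rw [h2, h1]; ring
  have hSnonneg : ∀ (m : ℕ) (r : ℝ), 0 ≤ ∑ j ∈ Finset.range (m + 1), r ^ (2 * j) := by
    intro m r
    apply Finset.sum_nonneg
    intro j _
    have : 0 ≤ (r ^ 2) ^ j := pow_nonneg (sq_nonneg r) j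
    rwa [← pow_mul] at this
  -- integral of g m
  have hgint : ∀ m : ℕ, ∫ r in Set.Ioo (-1 : ℝ) 1, g m r
      = ψ (m + 1) * t ^ (2 * m) * (2 * harmonicNum (2 * m + 1) - harmonicNum m) := by
    intro m
    rw [hgdef]
    simp only []
    rw [MeasureTheory.integral_const_mul,
      MeasureTheory.integral_finset_sum _ (fun j _ =>
        ((continuous_pow (2 * j)).integrableOn_Icc (a := (-1:ℝ)) (b := 1)).mono_set
          Set.Ioo_subset_Icc_self)]
    rw [Finset.sum_congr rfl fun j (_ : j ∈ Finset.range (m + 1)) => integral_even_pow j,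
      hsum2 m]
  have hgnorm : ∀ m : ℕ, ∫ r in Set.Ioo (-1 : ℝ) 1, ‖g m r‖
      = |ψ (m + 1)| * t ^ (2 * m) * (2 * harmonicNum (2 * m + 1) - harmonicNum m) := by
    intro m
    have h1 : ∀ r : ℝ, ‖g m r‖
        = |ψ (m + 1)| * t ^ (2 * m) * ∑ j ∈ Finset.range (m + 1), r ^ (2 * j) := by
      intro r
      rw [Real.norm_eq_abs, hgdef]
      simp only []
      rw [abs_mul, abs_mul, abs_of_nonneg (pow_nonneg ht0.le _),
        abs_of_nonneg (hSnonneg m r)]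
    simp_rw [h1]
    rw [MeasureTheory.integral_const_mul,
      MeasureTheory.integral_finset_sum _ (fun j _ =>
        ((continuous_pow (2 * j)).integrableOn_Icc (a := (-1:ℝ)) (b := 1)).mono_set
          Set.Ioo_subset_Icc_self)]
    rw [Finset.sum_congr rfl fun j (_ : j ∈ Finset.range (m + 1)) => integral_even_pow j,
      hsum2 m]
  have hsum_norm : Summable (fun m : ℕ => ∫ r in Set.Ioo (-1 : ℝ) 1, ‖g m r‖) := by
    apply Summable.of_nonneg_of_le
      (fun m => MeasureTheory.integral_nonneg (fun r => norm_nonneg _))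
      (fun m => ?_) hsum_u
    rw [hgnorm m]
    exact hbound m
  have hswap := MeasureTheory.integral_tsum_of_summable_integral_norm
    (μ := volume.restrict (Set.Ioo (-1 : ℝ) 1)) (F := g) hint_g hsum_norm
  -- a.e. equality
  have hne0 : ∀ᵐ r : ℝ, r ≠ 0 := by
    rw [ae_iff]
    have : {a : ℝ | ¬a ≠ 0} = {0} := by ext x; simp
    rw [this]
    exact Real.volume_singleton
  have hae : (fun r : ℝ =>
        (r * Real.cos (((ℓ : ℝ) + 1) * t * r / 2) / Real.sin (t * r / 2)
            - Real.cos (((ℓ : ℝ) + 1) * t / 2) / Real.sin (t / 2)) / (t * (1 - r ^ 2)))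
      =ᵐ[volume.restrict (Set.Ioo (-1 : ℝ) 1)] (fun r => -∑' m, g m r) := by
    filter_upwards [MeasureTheory.ae_restrict_of_ae hne0,
      MeasureTheory.ae_restrict_mem measurableSet_Ioo] with r hr0 hrm
    have h2 := (key r hrm hr0).tsum_eq
    rw [tsum_neg] at h2
    exact h2.symm
  -- continuity of the tsum
  have hconts : ContinuousOn (fun r : ℝ => ∑' m, g m r) (Set.Icc (-1 : ℝ) 1) := by
    apply continuousOn_tsum (fun m => (hcont_g m).continuousOn) hsum_u
    intro m r hrm
    have hrabs : |r| ≤ 1 := abs_le.2 ⟨hrm.1, hrm.2⟩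
    have hSle : ∑ j ∈ Finset.range (m + 1), r ^ (2 * j) ≤ (m : ℝ) + 1 := by
      calc ∑ j ∈ Finset.range (m + 1), r ^ (2 * j)
          ≤ ∑ j ∈ Finset.range (m + 1), 1 := by
            apply Finset.sum_le_sum
            intro j _
            calc r ^ (2 * j) ≤ |r ^ (2 * j)| := le_abs_self _
              _ = |r| ^ (2 * j) := abs_pow r _
              _ ≤ 1 := pow_le_one₀ (abs_nonneg r) hrabs
        _ = (m : ℝ) + 1 := by simp
    rw [Real.norm_eq_abs, hgdef]
    simp only []
    rw [abs_mul, abs_mul, abs_of_nonneg (pow_nonneg ht0.le _),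
      abs_of_nonneg (hSnonneg m r)]
    calc |ψ (m + 1)| * t ^ (2 * m) * ∑ j ∈ Finset.range (m + 1), r ^ (2 * j)
        ≤ (C * q ^ m) * ((m : ℝ) + 1) :=
          mul_le_mul (hψb m) hSle (hSnonneg m r) (le_trans (by positivity) (hψb m))
      _ ≤ u m := by
          have h9 : 0 ≤ C * q ^ m * ((m : ℝ) + 1) :=
            mul_nonneg (mul_nonneg hC0 (pow_nonneg hq0 m)) (by positivity)
          rw [hudef]; simp only []; nlinarith [h9]
  have hint_tsum : IntegrableOn (fun r : ℝ => ∑' m, g m r) (Set.Ioo (-1 : ℝ) 1) :=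
    (hconts.integrableOn_Icc).mono_set Set.Ioo_subset_Icc_self
  refine ⟨(hint_tsum.neg).congr hae.symm, hsummable, ?_⟩
  calc ∫ r in Set.Ioo (-1 : ℝ) 1,
        (r * Real.cos (((ℓ : ℝ) + 1) * t * r / 2) / Real.sin (t * r / 2)
            - Real.cos (((ℓ : ℝ) + 1) * t / 2) / Real.sin (t / 2)) / (t * (1 - r ^ 2))
      = ∫ r in Set.Ioo (-1 : ℝ) 1, -∑' m, g m r := MeasureTheory.integral_congr_ae hae
    _ = -∫ r in Set.Ioo (-1 : ℝ) 1, ∑' m, g m r := MeasureTheory.integral_neg _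
    _ = -∑' m : ℕ, ∫ r in Set.Ioo (-1 : ℝ) 1, g m r := by rw [hswap]
    _ = -∑' m : ℕ, ψ (m + 1) * (2 * harmonicNum (2 * m + 1) - harmonicNum m) * t ^ (2 * m) := by
        congr 1
        apply tsum_congr
        intro m
        rw [hgint m]
        ring
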